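/- Let I be a two-valued interpretation of an extended logic program P. Then an objective literal L is in Γ_P(I) if and only if there exists an argument A for P with conclusion L such that every assumption of A is in I (i.e., for every 'not L'' ∈ assm(A), L' ∉ I). -/

import Mathlib

/-- Objective literals: atoms and their explicit negations. -/
inductive Lit : Type where
  | pos : String → Lit
  | neg : String → Lit
deriving DecidableEq

/-- Explicit negation of an objective literal (`¬¬L = L`). -/
def Lit.compl : Lit → Lit
  | .pos a => .neg a
  | .neg a => .pos a

/-- A rule `head ← pos, not neg` of an extended logic program:
`pos` are the objective body literals and `neg` the default-negated ones. -/
structure Rule where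
  head : Lit
  pos : List Lit
  neg : List Lit

/-- An extended logic program is a set of rules. -/
abbrev Program := Set Rule

/-- An argument for `P`: a finite sequence of rules of `P` such that every
objective literal in the body of a rule is the head of a later rule. -/
def IsArg (P : Program) (A : List Rule) : Prop :=
  (∀ r ∈ A, r ∈ P) ∧
  ∀ i : Fin A.length, ∀ L ∈ (A.get i).pos,
    ∃ k : Fin A.length, i < k ∧ (A.get k).head = L

/-- The conclusions of an argument: the heads of its rules. -/
def conc (A : List Rule) : Set Lit := {L | ∃ r ∈ A, r.head = L}

/-- The assumptions of an argument: the objective literals `L` such that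
`not L` occurs in the body of one of its rules. -/
def assm (A : List Rule) : Set Lit := {L | ∃ r ∈ A, L ∈ r.neg}

/-- `A` is a minimal argument for `L`: no proper subargument of `A` has
conclusion `L`. -/
def MinimalArgFor (P : Program) (A : List Rule) (L : Lit) : Prop :=
  IsArg P A ∧ L ∈ conc A ∧
  ∀ B : List Rule, B.Sublist A → B ≠ A → IsArg P B → L ∉ conc B

/-- The set of minimal arguments of `P`. -/
def Args (P : Program) : Type := {A : List Rule // ∃ L, MinimalArgFor P A L}

/-- `A` undercuts `B`: some conclusion `L` of `A` is an assumption `not L` of `B`. -/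
def undercuts {P : Program} (A B : Args P) : Prop :=
  ∃ L, L ∈ conc A.1 ∧ L ∈ assm B.1

/-- `A` rebuts `B`: some conclusion `L` of `A` has `¬L` a conclusion of `B`. -/
def rebuts {P : Program} (A B : Args P) : Prop :=
  ∃ L, L ∈ conc A.1 ∧ L.compl ∈ conc B.1

/-- `A` attacks `B` iff `A` undercuts or rebuts `B`. -/
def attacks {P : Program} (A B : Args P) : Prop := undercuts A B ∨ rebuts A B

/-- `A` defeats `B` iff `A` undercuts `B`, or `A` rebuts `B` and `B` does not
undercut `A`. -/
def defeats {P : Program} (A B : Args P) : Prop :=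
  undercuts A B ∨ (rebuts A B ∧ ¬ undercuts B A)

/-- `A` strongly undercuts `B` iff `A` undercuts `B` and `B` does not undercut `A`. -/
def sundercuts {P : Program} (A B : Args P) : Prop :=
  undercuts A B ∧ ¬ undercuts B A

/-- The set of `x/y`-acceptable arguments with respect to `S`. -/
def Facc {Arg : Type*} (x y : Arg → Arg → Prop) (S : Set Arg) : Set Arg :=
  {A | ∀ B, x B A → ∃ C ∈ S, y C B}

theorem Facc_mono {Arg : Type*} (x y : Arg → Arg → Prop) : Monotone (Facc x y) := by
  intro S T hST A hA B hB
  obtain ⟨C, hC, hCB⟩ := hA B hB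
  exact ⟨C, hST hC, hCB⟩

/-- `Facc` as an order homomorphism. -/
def Fhom {Arg : Type*} (x y : Arg → Arg → Prop) : Set Arg →o Set Arg :=
  ⟨Facc x y, Facc_mono x y⟩

/-- The set of `x/y`-justified arguments. -/
def Jlfp {Arg : Type*} (x y : Arg → Arg → Prop) : Set Arg :=
  OrderHom.lfp (Fhom x y)

/-- Derivability in the least model of the GL-transformation `P/I`:
rules whose default-negated body literals avoid `I` may fire. -/
inductive GammaDeriv (P : Program) (I : Set Lit) : Lit → Prop where
  | step (r : Rule) (hr : r ∈ P) (hneg : ∀ L ∈ r.neg, L ∉ I)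
      (hpos : ∀ L ∈ r.pos, GammaDeriv P I L) : GammaDeriv P I r.head

/-- The Gelfond–Lifschitz operator `Γ_P`. -/
def Gamma (P : Program) (I : Set Lit) : Set Lit := {L | GammaDeriv P I L}

/-- The semi-normal version of `P`: each rule `L ← Body` becomes
`L ← not ¬L, Body`. -/
def seminormal (P : Program) : Program :=
  {r' | ∃ r ∈ P, r' = ⟨r.head, r.pos, r.head.compl :: r.neg⟩}

/-- `Γ_s`, the `Γ` operator of the semi-normal program. -/
def GammaS (P : Program) (I : Set Lit) : Set Lit := Gamma (seminormal P) I

theorem Gamma_anti (P : Program) : ∀ {I I' : Set Lit}, I ⊆ I' → Gamma P I' ⊆ Gamma P I := by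
  intro I I' h L hL
  induction hL with
  | step r hr hneg hpos ih =>
      exact GammaDeriv.step r hr (fun L hL hI => hneg L hL (h hI)) ih

/-- The monotone operator `I ↦ Γ_P (Γ_Q I)`. -/
def GammaComp (P Q : Program) : Set Lit →o Set Lit :=
  ⟨fun I => Gamma P (Gamma Q I), fun _ _ h => Gamma_anti P (Gamma_anti Q h)⟩

lemma isArg_append {P : Program} {A B : List Rule}
    (h1 : IsArg P A) (h2 : IsArg P B) : IsArg P (A ++ B) := by
  constructor
  · intro r hr
    rcases List.mem_append.1 hr with h | h
    · exact h1.1 r h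
    · exact h2.1 r h
  · intro i L hL
    have hi : i.val < A.length + B.length := by simpa using i.isLt
    by_cases hA : i.val < A.length
    · have hget : (A ++ B).get i = A.get ⟨i, hA⟩ := by
        simp only [List.get_eq_getElem]
        exact List.getElem_append_left hA
      obtain ⟨k, hk, hhead⟩ := h1.2 ⟨i, hA⟩ L (hget ▸ hL)
      have hk' : k.val < (A ++ B).length := by simp; omega
      refine ⟨⟨k, hk'⟩, ?_, ?_⟩
      · exact hk
      · have : (A ++ B).get ⟨k, hk'⟩ = A.get k := by
          simp [List.get_eq_getElem, List.getElem_append_left]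
        rw [this]; exact hhead
    · push_neg at hA
      have hj : i.val - A.length < B.length := by omega
      have hget : (A ++ B).get i = B.get ⟨i.val - A.length, hj⟩ := by
        simp [List.get_eq_getElem, List.getElem_append_right, hA]
      obtain ⟨k, hk, hhead⟩ := h2.2 ⟨i.val - A.length, hj⟩ L (hget ▸ hL)
      have hk' : A.length + k.val < (A ++ B).length := by simp
      refine ⟨⟨A.length + k.val, hk'⟩, ?_, ?_⟩
      · have hlt : i.val - A.length < k.val := hk
        simp only [Fin.lt_def]
        omega
      · have : (A ++ B).get ⟨A.length + k.val, hk'⟩ = B.get k := by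
          simp [List.get_eq_getElem, List.getElem_append_right]
        rw [this]; exact hhead

lemma isArg_cons {P : Program} {B : List Rule} {r : Rule}
    (hB : IsArg P B) (hr : r ∈ P) (hpos : ∀ L ∈ r.pos, L ∈ conc B) :
    IsArg P (r :: B) := by
  constructor
  · intro s hs
    rcases List.mem_cons.1 hs with h | h
    · exact h ▸ hr
    · exact hB.1 s h
  · intro i L hL
    rcases i with ⟨iv, hiv⟩
    match iv, hiv with
    | 0, hiv =>
      obtain ⟨s, hs, hh⟩ := hpos L hL
      obtain ⟨j, hj⟩ := List.get_of_mem hs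
      have hk' : j.val + 1 < (r :: B).length := by simp
      refine ⟨⟨j.val + 1, hk'⟩, by simp [Fin.lt_def], ?_⟩
      have : (r :: B).get ⟨j.val + 1, hk'⟩ = B.get j := rfl
      rw [this, hj]
      try exact hh
    | iv + 1, hiv =>
      have hiv' : iv < B.length := by simpa using hiv
      have hget : (r :: B).get ⟨iv + 1, hiv⟩ = B.get ⟨iv, hiv'⟩ := rfl
      obtain ⟨k, hk, hhead⟩ := hB.2 ⟨iv, hiv'⟩ L (hget ▸ hL)
      have hk' : k.val + 1 < (r :: B).length := by simp
      refine ⟨⟨k.val + 1, hk'⟩, ?_, ?_⟩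
      · have hlt : iv < k.val := hk
        simp only [Fin.lt_def]; omega
      · exact hhead

lemma exists_arg_for_list {P : Program} {I : Set Lit} (ls : List Lit)
    (h : ∀ L ∈ ls, ∃ A, IsArg P A ∧ L ∈ conc A ∧ ∀ L' ∈ assm A, L' ∉ I) :
    ∃ B, IsArg P B ∧ (∀ L ∈ ls, L ∈ conc B) ∧ ∀ L' ∈ assm B, L' ∉ I := by
  induction ls with
  | nil =>
    refine ⟨[], ⟨by simp, by simp⟩, by simp, by simp [assm]⟩
  | cons L ls ih =>
    obtain ⟨A, hA, hLA, hassmA⟩ := h L (by simp)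
    obtain ⟨B, hB, hconcB, hassmB⟩ := ih (fun L' hL' => h L' (by simp [hL']))
    refine ⟨A ++ B, isArg_append hA hB, ?_, ?_⟩
    · intro L' hL'
      rcases List.mem_cons.1 hL' with h' | h'
      · obtain ⟨s, hs, hh⟩ := h' ▸ hLA
        exact ⟨s, List.mem_append_left _ hs, hh⟩
      · obtain ⟨s, hs, hh⟩ := hconcB L' h'
        exact ⟨s, List.mem_append_right _ hs, hh⟩
    · rintro L' ⟨s, hs, hL's⟩
      rcases List.mem_append.1 hs with h' | h'
      · exact hassmA L' ⟨s, h', hL's⟩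
      · exact hassmB L' ⟨s, h', hL's⟩

/-- For a two-valued interpretation (given by its set `I` of true objective
literals), `L ∈ Γ_P(I)` iff there is an argument for `L` all of whose
assumptions hold in the interpretation. -/
theorem gamma_iff_argument (P : Program) (I : Set Lit) (L : Lit) :
    L ∈ Gamma P I ↔
      ∃ A : List Rule, IsArg P A ∧ L ∈ conc A ∧ ∀ L' ∈ assm A, L' ∉ I := by
  constructor
  · intro hL
    induction hL with
    | step r hr hneg hpos ih =>
      obtain ⟨B, hB, hconcB, hassmB⟩ := exists_arg_for_list r.pos ih
      refine ⟨r :: B, isArg_cons hB hr hconcB, ⟨r, by simp, rfl⟩, ?_⟩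
      rintro L' ⟨s, hs, hL's⟩
      rcases List.mem_cons.1 hs with h' | h'
      · exact hneg L' (h' ▸ hL's)
      · exact hassmB L' ⟨s, h', hL's⟩
  · rintro ⟨A, hA, hLA, hassm⟩
    have key : ∀ n, ∀ i : Fin A.length, A.length - i.val ≤ n →
        GammaDeriv P I (A.get i).head := by
      intro n
      induction n with
      | zero => intro i hi; exact absurd i.isLt (by omega)
      | succ n ih =>
        intro i hi
        refine GammaDeriv.step (A.get i) (hA.1 _ (List.get_mem A i)) ?_ ?_
        · intro L' hL' hI
          exact hassm L' ⟨A.get i, List.get_mem A i, hL'⟩ hI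
        · intro L' hL'
          obtain ⟨k, hk, hhead⟩ := hA.2 i L' hL'
          have := Fin.lt_def.1 hk
          have := k.isLt
          exact hhead ▸ ih k (by omega)
    obtain ⟨r, hr, hh⟩ := hLA
    obtain ⟨i, hi⟩ := List.get_of_mem hr
    have := key A.length i (by omega)
    rw [hi, hh] at this
    exact this
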